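/- Let f : ℝ → [0,∞) be a Lebesgue-measurable probability density (∫ f = 1) with finite second moment, and let σ(f)² = ∫ z² f(z) dz − (∫ z f(z) dz)² denote its variance. Then for all M > 0 and t > 0, ∫ 1{f(z) ≤ t} f(z) dz ≤ σ(f)²/M² + 2Mt. In particular, if σ(f) > 0, choosing M = t^{−1/3} σ(f)^{2/3} gives ∫ 1{f(z) ≤ t} f(z) dz ≤ 3 t^{2/3} σ(f)^{2/3}. -/

import Mathlib

open MeasureTheory

/-- Chebyshev-type bound on the probability that a density is small (Zhang 1997):
for a density `f` with finite second moment and variance `σ(f)²`,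
`∫ 1{f(z) ≤ t} f(z) dz ≤ σ(f)²/M² + 2Mt` for all `M, t > 0`; and if `σ(f) > 0`,
the choice `M = t^{−1/3} σ(f)^{2/3}` gives the bound `3 t^{2/3} σ(f)^{2/3}`. -/
theorem density_small_value_bound
    (f : ℝ → ℝ) (hf_meas : Measurable f) (hf_nonneg : ∀ z, 0 ≤ f z)
    (hf_int : Integrable f) (hf_one : ∫ z, f z = 1)
    (hf_m2 : Integrable (fun z => z ^ 2 * f z)) :
    (∀ M > (0:ℝ), ∀ t > (0:ℝ),
      ∫ z, Set.indicator {z : ℝ | f z ≤ t} f z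
        ≤ ((∫ z, z ^ 2 * f z) - (∫ z, z * f z) ^ 2) / M ^ 2 + 2 * M * t) ∧
    (0 < (∫ z, z ^ 2 * f z) - (∫ z, z * f z) ^ 2 →
      ∀ t > (0:ℝ),
        ∫ z, Set.indicator {z : ℝ | f z ≤ t} f z
          ≤ 3 * t ^ ((2:ℝ)/3) *
            (Real.sqrt ((∫ z, z ^ 2 * f z) - (∫ z, z * f z) ^ 2)) ^ ((2:ℝ)/3)) := by
  have h_zf : Integrable (fun z => z * f z) := by
    refine (hf_int.add hf_m2).mono' (measurable_id.mul hf_meas).aestronglyMeasurable ?_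
    filter_upwards with z
    have h1 : 0 ≤ f z := hf_nonneg z
    have h2 : ‖z * f z‖ = |z| * f z := by
      rw [Real.norm_eq_abs, abs_mul, abs_of_nonneg h1]
    simp only [Pi.add_apply]
    rw [h2]
    have habs : |z| ≤ 1 + z ^ 2 := by nlinarith [sq_abs z, sq_nonneg (|z| - 1)]
    nlinarith [mul_le_mul_of_nonneg_right habs h1]
  set μ := ∫ z, z * f z with hμ
  have key : ∀ M > (0:ℝ), ∀ t > (0:ℝ),
      ∫ z, Set.indicator {z : ℝ | f z ≤ t} f z
        ≤ ((∫ z, z ^ 2 * f z) - μ ^ 2) / M ^ 2 + 2 * M * t := by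
    intro M hM t ht
    have hM2 : (0:ℝ) < M ^ 2 := by positivity
    have hlhs_int : Integrable (fun z => Set.indicator {z : ℝ | f z ≤ t} f z) := by
      rw [show (fun z => Set.indicator {z : ℝ | f z ≤ t} f z)
          = Set.indicator {z : ℝ | f z ≤ t} f from rfl]
      exact hf_int.indicator (hf_meas measurableSet_Iic)
    have h1_int : Integrable (fun z => (z - μ) ^ 2 / M ^ 2 * f z) := by
      have heq : ∀ z, (z - μ) ^ 2 / M ^ 2 * f z
          = (z ^ 2 * f z - (2 * μ) * (z * f z) + μ ^ 2 * f z) / M ^ 2 := by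
        intro z; field_simp; ring
      simp_rw [heq]
      exact ((hf_m2.sub (h_zf.const_mul (2 * μ))).add (hf_int.const_mul (μ ^ 2))).div_const _
    have h2_int : Integrable (fun z => Set.indicator (Set.Icc (μ - M) (μ + M)) (fun _ => t) z) := by
      rw [show (fun z => Set.indicator (Set.Icc (μ - M) (μ + M)) (fun _ => t) z)
          = Set.indicator (Set.Icc (μ - M) (μ + M)) (fun _ => t) from rfl]
      rw [integrable_indicator_iff measurableSet_Icc]
      exact (integrableOn_const_iff).mpr (Or.inr measure_Icc_lt_top)
    have hpoint : ∀ z, Set.indicator {z : ℝ | f z ≤ t} f z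
        ≤ (z - μ) ^ 2 / M ^ 2 * f z + Set.indicator (Set.Icc (μ - M) (μ + M)) (fun _ => t) z := by
      intro z
      have hfz := hf_nonneg z
      have hnn : (0:ℝ) ≤ (z - μ) ^ 2 / M ^ 2 * f z := by positivity
      by_cases hz : z ∈ Set.Icc (μ - M) (μ + M)
      · rw [Set.indicator_of_mem hz]
        by_cases hft : f z ≤ t
        · rw [Set.indicator_of_mem (show z ∈ {z : ℝ | f z ≤ t} from hft) f]; linarith
        · rw [Set.indicator_of_notMem (show z ∉ {z : ℝ | f z ≤ t} from hft) f]; linarith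
      · rw [Set.indicator_of_notMem hz]
        have hfar : M ^ 2 ≤ (z - μ) ^ 2 := by
          simp only [Set.mem_Icc, not_and_or, not_le] at hz
          rcases hz with h | h
          · nlinarith
          · nlinarith
        have h1 : f z ≤ (z - μ) ^ 2 / M ^ 2 * f z := by
          rw [div_mul_eq_mul_div, le_div_iff₀ hM2]
          nlinarith [mul_le_mul_of_nonneg_left hfar hfz]
        by_cases hft : f z ≤ t
        · rw [Set.indicator_of_mem (show z ∈ {z : ℝ | f z ≤ t} from hft) f]; linarith
        · rw [Set.indicator_of_notMem (show z ∉ {z : ℝ | f z ≤ t} from hft) f]; linarith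
    have hmono := integral_mono hlhs_int (h1_int.add h2_int) hpoint
    simp only [Pi.add_apply] at hmono
    rw [integral_add h1_int h2_int] at hmono
    have e1 : ∫ z, (z - μ) ^ 2 / M ^ 2 * f z = ((∫ z, z ^ 2 * f z) - μ ^ 2) / M ^ 2 := by
      have heq : ∀ z, (z - μ) ^ 2 / M ^ 2 * f z
          = (z ^ 2 * f z - (2 * μ) * (z * f z) + μ ^ 2 * f z) / M ^ 2 := by
        intro z; field_simp; ring
      have ia : Integrable (fun z => z ^ 2 * f z - 2 * μ * (z * f z)) := by
        exact hf_m2.sub (h_zf.const_mul (2 * μ))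
      have ia' : Integrable (fun z => 2 * μ * (z * f z)) := by
        exact h_zf.const_mul (2 * μ)
      have ib : Integrable (fun z => μ ^ 2 * f z) := by
        exact hf_int.const_mul (μ ^ 2)
      simp_rw [heq]
      rw [integral_div, integral_add ia ib, integral_sub hf_m2 ia',
        integral_const_mul, integral_const_mul, hf_one, ← hμ]
      ring
    have e2 : ∫ z, Set.indicator (Set.Icc (μ - M) (μ + M)) (fun _ => t) z = 2 * M * t := by
      rw [integral_indicator measurableSet_Icc, setIntegral_const, Real.volume_real_Icc,
        smul_eq_mul]
      rw [show μ + M - (μ - M) = 2 * M by ring, max_eq_left (by positivity)]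
    rw [e1, e2] at hmono
    exact hmono
  refine ⟨key, ?_⟩
  intro hσ t ht
  set σ := Real.sqrt ((∫ z, z ^ 2 * f z) - μ ^ 2) with hσdef
  have hs : 0 < σ := Real.sqrt_pos.mpr hσ
  have hσ2 : (∫ z, z ^ 2 * f z) - μ ^ 2 = σ ^ 2 := (Real.sq_sqrt hσ.le).symm
  set M := t ^ (-(1:ℝ)/3) * σ ^ ((2:ℝ)/3) with hMdef
  have hM : 0 < M := by positivity
  have hkey := key M hM t ht
  have harith : ((∫ z, z ^ 2 * f z) - μ ^ 2) / M ^ 2 + 2 * M * t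
      = 3 * t ^ ((2:ℝ)/3) * σ ^ ((2:ℝ)/3) := by
    rw [hσ2, hMdef]
    rw [mul_pow, ← Real.rpow_natCast (t ^ (-(1:ℝ)/3)) 2,
      ← Real.rpow_natCast (σ ^ ((2:ℝ)/3)) 2, ← Real.rpow_mul ht.le, ← Real.rpow_mul hs.le,
      ← Real.rpow_natCast σ 2]
    norm_num
    rw [Real.rpow_neg ht.le, Real.rpow_neg ht.le]
    field_simp
    have ht1 : t ^ ((2:ℝ)/3) * t ^ ((1:ℝ)/3) = t := by
      rw [← Real.rpow_add ht]
      norm_num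
    have hs1 : σ ^ ((2:ℝ)/3) * σ ^ ((4:ℝ)/3) = σ ^ 2 := by
      rw [← Real.rpow_add hs, show (2:ℝ)/3 + 4/3 = ((2:ℕ):ℝ) by norm_num,
        Real.rpow_natCast]
    linear_combination (σ ^ 2 - 3 * (σ ^ ((2:ℝ)/3) * σ ^ ((4:ℝ)/3))) * ht1 - t * hs1
  linarith [hkey, harith.le, harith.ge]
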